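/- Let U₁ ≠ U₂ be points in ℝ² and let r₁, r₂ be rotations about U₁ and U₂ respectively, each through an irrational multiple of π (hence of infinite order). Then for every P ∈ ℝ², the orbit of P under the group of isometries of ℝ² generated by r₁ and r₂ is dense in ℝ². -/

import Mathlib

noncomputable section
open Real

abbrev E2 := EuclideanSpace ℝ (Fin 2)

/-- Rotation of the plane about the point `U` through `θ` radians. -/
def rot2 (U : E2) (θ : ℝ) (x : E2) : E2 :=
  U + (EuclideanSpace.equiv (Fin 2) ℝ).symm
    ![Real.cos θ * (x 0 - U 0) - Real.sin θ * (x 1 - U 1),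
      Real.sin θ * (x 0 - U 0) + Real.cos θ * (x 1 - U 1)]

namespace Stmt8Aux


def ψ : E2 ≃ₗᵢ[ℝ] ℂ := Complex.orthonormalBasisOneI.repr.symm

lemma ψ_apply (x : E2) : ψ x = x 0 + x 1 * Complex.I :=
  Complex.orthonormalBasisOneI_repr_symm_apply x

lemma ψ_rot2 (U : E2) (θ : ℝ) (x : E2) :
    ψ (rot2 U θ x) = ψ U + Complex.exp (θ * Complex.I) * (ψ x - ψ U) := by
  simp only [rot2, ψ_apply, Complex.exp_mul_I]
  apply Complex.ext
  · simp [Complex.add_re, Complex.mul_re]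
  · simp [Complex.add_im, Complex.mul_im]; ring

/-- `f` acts on the plane (transported to `ℂ`) as rotation about `c` by unit `w`. -/
def Rot (f : E2 ≃ᵢ E2) (c w : ℂ) : Prop := ∀ x, ψ (f x) = c + w * (ψ x - c)

/-- `f` acts as translation by `v`. -/
def Transl (f : E2 ≃ᵢ E2) (v : ℂ) : Prop := ∀ x, ψ (f x) = ψ x + v

lemma Rot.inv {f : E2 ≃ᵢ E2} {c w : ℂ} (h : Rot f c w) (hw : w ≠ 0) :
    Rot f⁻¹ c w⁻¹ := by
  intro x
  have := h (f⁻¹ x)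
  rw [IsometryEquiv.apply_inv_self] at this
  have h2 : ψ x - c = w * (ψ (f⁻¹ x) - c) := by linear_combination this
  rw [h2, ← mul_assoc, inv_mul_cancel₀ hw, one_mul]
  ring

lemma Rot.mul {f g : E2 ≃ᵢ E2} {c w w' : ℂ} (hf : Rot f c w) (hg : Rot g c w') :
    Rot (f * g) c (w * w') := by
  intro x
  rw [IsometryEquiv.mul_apply, hf, hg]
  ring

lemma Rot.zpow {f : E2 ≃ᵢ E2} {c w : ℂ} (h : Rot f c w) (hw : w ≠ 0) (n : ℤ) :
    Rot (f ^ n) c (w ^ n) := by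
  have hnat : ∀ m : ℕ, Rot (f ^ m) c (w ^ m) := by
    intro m
    induction m with
    | zero => intro x; simp
    | succ k ih =>
      have := Rot.mul ih h
      rw [← pow_succ] at this
      simpa [pow_succ] using this
  obtain ⟨m, rfl | rfl⟩ := Int.eq_nat_or_neg n
  · simpa using hnat m
  · have := (hnat m).inv (pow_ne_zero _ hw)
    simpa [zpow_neg, zpow_natCast] using this

lemma Rot.conj {f g : E2 ≃ᵢ E2} {c c' w w' : ℂ} (hg : Rot g c' w') (hf : Rot f c w)
    (hw' : w' ≠ 0) : Rot (g * f * g⁻¹) (c' + w' * (c - c')) w := by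
  intro x
  rw [IsometryEquiv.mul_apply, IsometryEquiv.mul_apply, hg, hf, hg.inv hw']
  field_simp
  ring

lemma rot_mul_inv_transl {f f' : E2 ≃ᵢ E2} {c c' w : ℂ} (hf : Rot f c w) (hf' : Rot f' c' w)
    (hw : w ≠ 0) : Transl (f * f'⁻¹) ((1 - w) * (c - c')) := by
  intro x
  rw [IsometryEquiv.mul_apply, hf, hf'.inv hw]
  field_simp
  ring

lemma rot_conj_transl {g t : E2 ≃ᵢ E2} {c w v : ℂ} (hg : Rot g c w) (hw : w ≠ 0)
    (ht : Transl t v) : Transl (g * t * g⁻¹) (w * v) := by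
  intro x
  rw [IsometryEquiv.mul_apply, IsometryEquiv.mul_apply, hg, ht, hg.inv hw]
  field_simp
  ring

lemma Transl.mul {f g : E2 ≃ᵢ E2} {v u : ℂ} (hf : Transl f v) (hg : Transl g u) :
    Transl (f * g) (u + v) := by
  intro x
  rw [IsometryEquiv.mul_apply, hf, hg]
  ring

lemma Transl.inv {f : E2 ≃ᵢ E2} {v : ℂ} (h : Transl f v) : Transl f⁻¹ (-v) := by
  intro x
  have := h (f⁻¹ x)
  rw [IsometryEquiv.apply_inv_self] at this
  linear_combination -this

/-- The additive subgroup of translation vectors realized by a group `G` of isometries. -/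
def translSet (G : Subgroup (E2 ≃ᵢ E2)) : AddSubgroup ℂ where
  carrier := {v | ∃ g ∈ G, Transl g v}
  zero_mem' := ⟨1, one_mem G, fun x => by simp [Transl]⟩
  add_mem' := by
    rintro a b ⟨f, hfG, hf⟩ ⟨g, hgG, hg⟩
    exact ⟨g * f, mul_mem hgG hfG, by simpa [add_comm] using hg.mul hf⟩
  neg_mem' := by
    rintro a ⟨f, hfG, hf⟩
    exact ⟨f⁻¹, inv_mem hfG, hf.inv⟩


lemma mem_translSet {G : Subgroup (E2 ≃ᵢ E2)} {v : ℂ} :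
    v ∈ translSet G ↔ ∃ g ∈ G, Transl g v := Iff.rfl


/-- Powers of `exp(ρπ i)` are dense in the unit circle when `ρ` is irrational. -/
lemma dense_zpow {ρ : ℝ} (hρ : Irrational ρ) (ζ : ℂ) (hζ : ‖ζ‖ = 1) :
    ζ ∈ closure (Set.range fun m : ℤ => Complex.exp ((ρ * π : ℝ) * Complex.I) ^ m) := by
  set S₀ := AddSubgroup.closure ({ρ * π, 2 * π} : Set ℝ) with hS₀
  have hdense : Dense (S₀ : Set ℝ) := by
    rcases S₀.dense_or_cyclic with h | ⟨a, ha⟩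
    · exact h
    · exfalso
      have h₁ : ρ * π ∈ S₀ := AddSubgroup.subset_closure (by simp)
      have h₂ : 2 * π ∈ S₀ := AddSubgroup.subset_closure (by simp)
      rw [ha, AddSubgroup.mem_closure_singleton] at h₁ h₂
      obtain ⟨m, hm⟩ := h₁
      obtain ⟨n, hn⟩ := h₂
      have h1 : (m : ℝ) * a = ρ * π := by rw [← zsmul_eq_mul]; exact_mod_cast hm
      have h2 : (n : ℝ) * a = 2 * π := by rw [← zsmul_eq_mul]; exact_mod_cast hn
      have hn0 : (n : ℝ) * a ≠ 0 := by rw [h2]; positivity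
      have hne : (n : ℝ) ≠ 0 := fun h => hn0 (by rw [h, zero_mul])
      have ha0 : a ≠ 0 := fun h => hn0 (by rw [h, mul_zero])
      have key : (2 * (m : ℝ)) * a = (ρ * n) * a := by linear_combination 2 * h1 - ρ * h2
      have hρval : ρ = 2 * (m : ℝ) / n := by
        rw [eq_div_iff hne]
        have := mul_right_cancel₀ ha0 key
        linarith
      exact hρ ⟨2 * (m : ℚ) / n, by rw [hρval]; push_cast; ring⟩
  have hζeq : ζ = Complex.exp ((Complex.arg ζ : ℝ) * Complex.I) := by
    conv_lhs => rw [← Complex.norm_mul_exp_arg_mul_I ζ]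
    rw [hζ]; simp
  have harg : (Complex.arg ζ : ℝ) ∈ closure (S₀ : Set ℝ) := hdense _
  have hmap : (fun t : ℝ => Complex.exp ((t : ℝ) * Complex.I)) '' (S₀ : Set ℝ) ⊆
      Set.range fun m : ℤ => Complex.exp ((ρ * π : ℝ) * Complex.I) ^ m := by
    rintro _ ⟨s, hs, rfl⟩
    rw [SetLike.mem_coe, hS₀, AddSubgroup.mem_closure_pair] at hs
    obtain ⟨m, n, rfl⟩ := hs
    refine ⟨m, ?_⟩
    have h3 : ((m • (ρ * π) + n • (2 * π) : ℝ) : ℂ) * Complex.I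
        = m * (((ρ * π : ℝ) : ℂ) * Complex.I) + n * (2 * π * Complex.I) := by
      push_cast [zsmul_eq_mul]; ring
    show Complex.exp ((ρ * π : ℝ) * Complex.I) ^ m
        = Complex.exp (((m • (ρ * π) + n • (2 * π) : ℝ) : ℂ) * Complex.I)
    rw [h3, Complex.exp_add, Complex.exp_int_mul, Complex.exp_int_mul_two_pi_mul_I, mul_one]
  rw [hζeq]
  have h1 : Complex.exp ((Complex.arg ζ : ℝ) * Complex.I)
      ∈ (fun t : ℝ => Complex.exp ((t : ℝ) * Complex.I)) '' closure (S₀ : Set ℝ) :=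
    ⟨_, harg, rfl⟩
  exact closure_mono hmap (image_closure_subset_closure_image (Complex.continuous_exp.comp (Complex.continuous_ofReal.mul continuous_const)) h1)

/-- Every complex number of modulus at most `2R` is a sum of two of modulus `R`. -/
lemma sum_two (R : ℝ) (hR : 0 < R) (z : ℂ) (hz : ‖z‖ ≤ 2 * R) :
    ∃ u v : ℂ, ‖u‖ = R ∧ ‖v‖ = R ∧ u + v = z := by
  set α := Complex.arg z
  set β := Real.arccos (‖z‖ / (2 * R))
  refine ⟨R * Complex.exp ((α + β : ℝ) * Complex.I),
          R * Complex.exp ((α - β : ℝ) * Complex.I), ?_, ?_, ?_⟩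
  · rw [norm_mul, Complex.norm_exp_ofReal_mul_I, mul_one, Complex.norm_real, Real.norm_eq_abs, abs_of_pos hR]
  · rw [norm_mul, Complex.norm_exp_ofReal_mul_I, mul_one, Complex.norm_real, Real.norm_eq_abs, abs_of_pos hR]
  · have hcos : Real.cos β = ‖z‖ / (2 * R) := by
      apply Real.cos_arccos
      · have h0 : (0:ℝ) ≤ ‖z‖ / (2 * R) := by positivity
        linarith
      · rw [div_le_one (by positivity)]; exact hz
    have key : Complex.exp ((α + β : ℝ) * Complex.I) + Complex.exp ((α - β : ℝ) * Complex.I)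
        = Complex.exp ((α : ℝ) * Complex.I) * (2 * (Real.cos β : ℂ)) := by
      have e1 : ((α + β : ℝ) : ℂ) * Complex.I = (α : ℝ) * Complex.I + (β : ℝ) * Complex.I := by
        push_cast; ring
      have e2 : ((α - β : ℝ) : ℂ) * Complex.I = (α : ℝ) * Complex.I + (-β : ℝ) * Complex.I := by
        push_cast; ring
      rw [e1, e2, Complex.exp_add, Complex.exp_add]
      simp only [Complex.exp_mul_I, Complex.ofReal_neg, Complex.cos_neg, Complex.sin_neg]
      rw [Complex.ofReal_cos]
      ring
    rw [← mul_add, key, hcos]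
    have h2 : (R : ℂ) * (Complex.exp ((α : ℝ) * Complex.I)
          * (2 * ((‖z‖ / (2 * R) : ℝ) : ℂ)))
        = ‖z‖ * Complex.exp ((α : ℝ) * Complex.I) := by
      have hRne : (R : ℂ) ≠ 0 := Complex.ofReal_ne_zero.mpr hR.ne'
      push_cast
      field_simp
    rw [h2, Complex.norm_mul_exp_arg_mul_I]


end Stmt8Aux

open Stmt8Aux in
/-- If `r₁, r₂` are rotations of the plane about distinct points `U₁ ≠ U₂` through
irrational multiples of `π`, then every orbit of the generated group of isometries is
dense in `ℝ²`. -/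
theorem stmt_8 (U₁ U₂ : E2) (hU : U₁ ≠ U₂) (ρ₁ ρ₂ : ℝ)
    (h₁ : Irrational ρ₁) (h₂ : Irrational ρ₂) (r₁ r₂ : E2 ≃ᵢ E2)
    (hr₁ : ∀ x, r₁ x = rot2 U₁ (ρ₁ * π) x) (hr₂ : ∀ x, r₂ x = rot2 U₂ (ρ₂ * π) x)
    (P : E2) :
    Dense {x : E2 | ∃ f ∈ Subgroup.closure {r₁, r₂}, x = f P} := by
  classical
  set G := Subgroup.closure {r₁, r₂} with hG
  set u₁ : ℂ := ψ U₁ with hu₁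
  set u₂ : ℂ := ψ U₂ with hu₂
  set a : ℂ := Complex.exp ((ρ₁ * π : ℝ) * Complex.I) with ha
  set b : ℂ := Complex.exp ((ρ₂ * π : ℝ) * Complex.I) with hb
  have hRr₁ : Rot r₁ u₁ a := fun x => by rw [hr₁, ψ_rot2]
  have hRr₂ : Rot r₂ u₂ b := fun x => by rw [hr₂, ψ_rot2]
  have ha0 : a ≠ 0 := Complex.exp_ne_zero _
  have hb0 : b ≠ 0 := Complex.exp_ne_zero _
  -- `a ≠ 1` and `b ≠ 1` since the angles are irrational multiples of π
  have hexp_ne_one : ∀ ρ : ℝ, Irrational ρ →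
      Complex.exp ((ρ * π : ℝ) * Complex.I) ≠ 1 := by
    intro ρ hρ h
    rw [Complex.exp_eq_one_iff] at h
    obtain ⟨n, hn⟩ := h
    have h3 := congrArg Complex.im hn
    simp [Complex.mul_im] at h3
    have hpi : ρ * π = n * (2 * π) := by simpa using h3
    exact hρ.ne_int (2 * n) (by push_cast; nlinarith [Real.pi_ne_zero, Real.pi_pos, hpi])
  have ha1 : a ≠ 1 := hexp_ne_one ρ₁ h₁
  have hb1 : b ≠ 1 := hexp_ne_one ρ₂ h₂
  have hu : u₁ - u₂ ≠ 0 := sub_ne_zero.mpr fun h => hU (ψ.injective h)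
  set w₀ : ℂ := (1 - a) * ((u₂ + b * (u₁ - u₂)) - u₁) with hw₀
  have hw₀0 : w₀ ≠ 0 := by
    have : w₀ = (1 - a) * ((b - 1) * (u₁ - u₂)) := by rw [hw₀]; ring
    rw [this]
    exact mul_ne_zero (sub_ne_zero.mpr fun h => ha1 h.symm)
      (mul_ne_zero (sub_ne_zero.mpr hb1) hu)
  have hr₁G : r₁ ∈ G := Subgroup.subset_closure (by simp)
  have hr₂G : r₂ ∈ G := Subgroup.subset_closure (by simp)
  set T := translSet G with hT
  -- w₀ is realized as a translation in G
  have hw₀T : w₀ ∈ T := by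
    rw [hT, mem_translSet]
    refine ⟨(r₂ * r₁ * r₂⁻¹) * r₁⁻¹,
      mul_mem (mul_mem (mul_mem hr₂G hr₁G) (inv_mem hr₂G)) (inv_mem hr₁G), ?_⟩
    exact rot_mul_inv_transl (hRr₂.conj hRr₁ hb0) hRr₁ ha0
  -- T is stable under multiplication by powers of a
  have hmulT : ∀ v ∈ T, ∀ m : ℤ, a ^ m * v ∈ T := by
    intro v hv m
    rw [hT, mem_translSet] at hv ⊢
    obtain ⟨t, htG, htv⟩ := hv
    exact ⟨(r₁ ^ m) * t * (r₁ ^ m)⁻¹,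
      mul_mem (mul_mem (zpow_mem hr₁G m) htG) (inv_mem (zpow_mem hr₁G m)),
      rot_conj_transl (hRr₁.zpow ha0 m) (zpow_ne_zero m ha0) htv⟩
  set K := T.topologicalClosure with hK
  have hKc : (K : Set ℂ) = closure (T : Set ℂ) := AddSubgroup.topologicalClosure_coe
  -- Every unit multiple of w₀ lies in K
  have step1 : ∀ ζ : ℂ, ‖ζ‖ = 1 → ζ * w₀ ∈ K := by
    intro ζ hζ
    have h := dense_zpow h₁ ζ hζ
    have h6 : ζ * w₀ ∈ closure ((fun z : ℂ => z * w₀) ''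
        (Set.range fun m : ℤ => a ^ m)) :=
      image_closure_subset_closure_image (continuous_mul_right w₀) ⟨ζ, h, rfl⟩
    have h7 : ((fun z : ℂ => z * w₀) '' (Set.range fun m : ℤ => a ^ m)) ⊆ (T : Set ℂ) := by
      rintro _ ⟨_, ⟨m, rfl⟩, rfl⟩
      simpa using hmulT w₀ hw₀T m
    have := closure_mono h7 h6
    rw [← hKc] at this
    exact this
  have hw₀pos : 0 < ‖w₀‖ := norm_pos_iff.mpr hw₀0
  -- Everything of modulus at most 2|w₀| lies in K
  have step2 : ∀ z : ℂ, ‖z‖ ≤ 2 * ‖w₀‖ → z ∈ K := by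
    intro z hz
    obtain ⟨u, v, hu', hv', rfl⟩ := sum_two (‖w₀‖) hw₀pos z hz
    have hmem : ∀ y : ℂ, ‖y‖ = ‖w₀‖ → y ∈ K := by
      intro y hy
      have : y = (y / w₀) * w₀ := (div_mul_cancel₀ y hw₀0).symm
      rw [this]
      exact step1 _ (by rw [norm_div, hy, div_self hw₀pos.ne'])
    exact add_mem (hmem u hu') (hmem v hv')
  -- K is everything
  have step3 : ∀ z : ℂ, z ∈ K := by
    intro z
    set n : ℕ := ⌈‖z‖ / (2 * ‖w₀‖)⌉₊ + 1 with hn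
    have hn0 : (0:ℝ) < n := by positivity
    have hnC : (n : ℂ) ≠ 0 := Nat.cast_ne_zero.mpr (by omega)
    have h8 : ‖z‖ / (2 * ‖w₀‖) ≤ (n : ℝ) := by
      have h9 := Nat.le_ceil (‖z‖ / (2 * ‖w₀‖))
      rw [hn]
      push_cast
      linarith
    have hzn : ‖(z / n)‖ ≤ 2 * ‖w₀‖ := by
      rw [norm_div, Complex.norm_natCast, div_le_iff₀ hn0]
      rw [div_le_iff₀ (by positivity)] at h8
      linarith
    have hzeq : z = n • (z / n) := by
      rw [nsmul_eq_mul, mul_comm, div_mul_cancel₀ z hnC]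
    have hin := nsmul_mem (step2 _ hzn) n
    rwa [← hzeq] at hin
  -- Conclude density
  rw [Metric.dense_iff]
  intro x ε hε
  have hx : ψ x - ψ P ∈ closure (T : Set ℂ) := by rw [← hKc]; exact step3 _
  rw [Metric.mem_closure_iff] at hx
  obtain ⟨v, hvT, hvd⟩ := hx ε hε
  rw [SetLike.mem_coe, mem_translSet] at hvT
  obtain ⟨g, hgG, hgv⟩ := hvT
  refine ⟨g P, Metric.mem_ball.2 ?_, ⟨g, hgG, rfl⟩⟩
  have hdist : dist (g P) x = dist (ψ (g P)) (ψ x) := (ψ.dist_map _ _).symm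
  rw [hdist, hgv]
  have h9 : ψ P + v - ψ x = -((ψ x - ψ P) - v) := by ring
  rw [dist_eq_norm, h9, norm_neg, ← dist_eq_norm]
  exact hvd
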